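/- For every real number x ≥ 0, the natural logarithm satisfies ln(1+x) ≤ x - (x²/2)·(1/(1+x/3))², with equality if and only if x = 0. -/

import Mathlib

noncomputable def fAux (x : ℝ) : ℝ :=
  x - x ^ 2 / 2 * (1 / (1 + x / 3)) ^ 2 - Real.log (1 + x)

lemma fAux_hasDerivAt (x : ℝ) (hx : 0 ≤ x) :
    HasDerivAt fAux
      (1 - (x * (1 / (1 + x / 3)) ^ 2 +
        x ^ 2 / 2 * (2 * (1 / (1 + x / 3)) * (-(1 / 3) / (1 + x / 3) ^ 2))) -
        (1 / (1 + x))) x := by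
  have h3 : (1 + x / 3) ≠ 0 := by positivity
  have h1 : (1 + x) ≠ 0 := by positivity
  have d1 : HasDerivAt (fun x : ℝ => 1 + x / 3) (1 / 3) x := by
    simpa using ((hasDerivAt_id x).div_const 3).const_add 1
  have d2 : HasDerivAt (fun x : ℝ => 1 / (1 + x / 3)) (-(1 / 3) / (1 + x / 3) ^ 2) x := by
    have := d1.inv h3
    simp only [one_div] at this ⊢
    exact this
  have d3 : HasDerivAt (fun x : ℝ => (1 / (1 + x / 3)) ^ 2)
      (2 * (1 / (1 + x / 3)) * (-(1 / 3) / (1 + x / 3) ^ 2)) x := by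
    have := d2.pow 2
    simp only [Nat.cast_ofNat, Nat.add_one_sub_one, pow_one] at this
    exact this
  have d4 : HasDerivAt (fun x : ℝ => x ^ 2 / 2) x x := by
    have := (hasDerivAt_pow 2 x).div_const 2
    simpa using this
  have d5 := d4.mul d3
  have d6 : HasDerivAt (fun x : ℝ => Real.log (1 + x)) (1 / (1 + x)) x := by
    have := (Real.hasDerivAt_log h1).comp x ((hasDerivAt_id x).const_add 1)
    simp only [one_div, mul_one] at this ⊢
    exact this
  exact ((hasDerivAt_id x).sub d5).sub d6

lemma key (y : ℝ) (hy : 0 < y) :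
    Real.log (1 + y) < y - y ^ 2 / 2 * (1 / (1 + y / 3)) ^ 2 := by
  have mono : StrictMonoOn fAux (Set.Ici 0) := by
    apply strictMonoOn_of_deriv_pos (convex_Ici 0)
    · exact fun z hz => (fAux_hasDerivAt z hz).continuousAt.continuousWithinAt
    · intro z hz
      rw [interior_Ici] at hz
      have hz' : (0:ℝ) < z := hz
      rw [(fAux_hasDerivAt z hz'.le).deriv]
      have h3 : (0:ℝ) < 1 + z / 3 := by linarith
      have h1 : (0:ℝ) < 1 + z := by linarith
      have h3' := h3.ne'
      have h1' := h1.ne'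
      rw [show (1:ℝ) - (z * (1 / (1 + z / 3)) ^ 2 +
        z ^ 2 / 2 * (2 * (1 / (1 + z / 3)) * (-(1 / 3) / (1 + z / 3) ^ 2))) -
        (1 / (1 + z)) = (z ^ 3 / 3 + z ^ 4 / 27) / ((1 + z / 3) ^ 3 * (1 + z)) by
          field_simp; ring]
      positivity
  have h := mono Set.self_mem_Ici (le_of_lt hy : (0:ℝ) ≤ y) hy
  rw [show fAux 0 = 0 by norm_num [fAux]] at h
  simp only [fAux] at h
  linarith

theorem log_upper_bound (x : ℝ) (hx : 0 ≤ x) :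
    Real.log (1 + x) ≤ x - x ^ 2 / 2 * (1 / (1 + x / 3)) ^ 2 ∧
    (Real.log (1 + x) = x - x ^ 2 / 2 * (1 / (1 + x / 3)) ^ 2 ↔ x = 0) := by
  rcases eq_or_lt_of_le hx with h | h
  · subst h; norm_num
  · exact ⟨(key x h).le, ⟨fun he => absurd he (key x h).ne, fun he => by simp [he] at *⟩⟩
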